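/- The cokernel isomorphism in the rank-one Dwork comparison is explicitly given by sending the class of x^α y^m to the class of (−1)^m m! / s^{m+1} · x^α in k[x][1/s]/k[x]: this assignment is well defined on coker(∂_y + s), k[x]-linear, and bijective. -/

import Mathlib

open Polynomial

namespace DworkRankOne

variable {k : Type} [Field k] [CharZero k] {n : ℕ}

local notation "R" => MvPolynomial (Fin n) k

/-- `1 / s^(m+1)` in the localization. -/
noncomputable def wm (s : R) (m : ℕ) : Localization.Away s :=
  IsLocalization.mk' (Localization.Away s) (1 : R)
    (⟨s ^ (m + 1), m + 1, rfl⟩ : Submonoid.powers s)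

noncomputable abbrev aL (s : R) : R →+* Localization.Away s := algebraMap R (Localization.Away s)

/-- The comparison map `g yᵐ ↦ (-1)^m m! g / s^(m+1)`. -/
noncomputable def phi (s : R) : Polynomial R →ₗ[R] Localization.Away s where
  toFun p := p.sum fun m g => aL s ((-1) ^ m * (m.factorial : R) * g) * wm s m
  map_add' p q := sum_add_index p q _ (fun i => by simp) (fun a b₁ b₂ => by
    rw [mul_add, map_add, add_mul])
  map_smul' c p := by
    dsimp only [RingHom.id_apply]
    have h : c • (p.sum fun m g => aL s ((-1) ^ m * (m.factorial : R) * g) * wm s m) =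
        aL s c * (p.sum fun m g => aL s ((-1) ^ m * (m.factorial : R) * g) * wm s m) :=
      Algebra.smul_def (A := Localization.Away s) c _
    rw [sum_smul_index _ _ _ (fun i => by simp), h, sum_def, sum_def, Finset.mul_sum]
    refine Finset.sum_congr rfl fun m _ => ?_
    rw [show (-1 : R) ^ m * (m.factorial : R) * (c * p.coeff m)
        = c * ((-1) ^ m * (m.factorial : R) * p.coeff m) by ring,
      map_mul, mul_assoc]

lemma phi_apply (s : R) (p : Polynomial R) :
    phi s p = p.sum fun m g => aL s ((-1) ^ m * (m.factorial : R) * g) * wm s m := rfl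

lemma phi_monomial (s : R) (m : ℕ) (g : R) :
    phi s (monomial m g) = aL s ((-1) ^ m * (m.factorial : R) * g) * wm s m := by
  rw [phi_apply]
  exact sum_monomial_index g _ (by simp)

lemma aL_mul_wm (s : R) (m : ℕ) (g : R) :
    aL s g * wm s m = IsLocalization.mk' (Localization.Away s) g
      (⟨s ^ (m + 1), m + 1, rfl⟩ : Submonoid.powers s) := by
  rw [wm, aL, IsLocalization.mul_mk'_eq_mk'_of_mul, mul_one]

/-- `s / s^(m+2) = 1 / s^(m+1)`. -/
lemma s_mul_wm (s : R) (m : ℕ) : aL s s * wm s (m + 1) = wm s m := by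
  rw [aL_mul_wm, wm]
  have : (⟨s ^ (m + 1 + 1), m + 1 + 1, rfl⟩ : Submonoid.powers s) =
      (⟨s ^ (m + 1), m + 1, rfl⟩ : Submonoid.powers s) * ⟨s, 1, pow_one s⟩ :=
    Subtype.ext (pow_succ s (m + 1))
  rw [this]
  have h2 := IsLocalization.mk'_cancel (M := Submonoid.powers s) (S := Localization.Away s)
    (1 : R) (⟨s ^ (m + 1), m + 1, rfl⟩ : Submonoid.powers s) ⟨s, 1, pow_one s⟩
  rw [one_mul] at h2
  exact h2

/-- `s^(N+1) / s^(m+1) = s^(N-m)` for `m ≤ N`. -/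
lemma pow_mul_wm (s : R) {m N : ℕ} (h : m ≤ N) :
    aL s (s ^ (N + 1)) * wm s m = aL s (s ^ (N - m)) := by
  rw [aL_mul_wm, show N + 1 = (N - m) + (m + 1) by omega, pow_add]
  exact IsLocalization.mk'_mul_cancel_right (M := Submonoid.powers s)
    (S := Localization.Away s) (s ^ (N - m)) ⟨s ^ (m + 1), m + 1, rfl⟩

noncomputable def Dop (s : R) : Polynomial R →ₗ[R] Polynomial R :=
  (Polynomial.derivative : Polynomial R →ₗ[R] Polynomial R) + LinearMap.mulLeft R (C s)

lemma Dop_monomial (s : R) (m : ℕ) (g : R) :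
    Dop s (monomial m g) = monomial (m - 1) (g * m) + monomial m (s * g) := by
  rw [Dop, LinearMap.add_apply, LinearMap.mulLeft_apply, derivative_monomial, C_mul_monomial]

lemma phi_Dop_mem (s : R) (p : Polynomial R) :
    phi s (Dop s p) ∈ LinearMap.range (Algebra.linearMap R (Localization.Away s)) := by
  induction p using Polynomial.induction_on' with
  | add p q hp hq => rw [map_add, map_add]; exact add_mem hp hq
  | monomial m g =>
    rw [Dop_monomial, map_add, phi_monomial, phi_monomial]
    cases m with
    | zero =>
      refine ⟨g, ?_⟩
      simp only [Nat.cast_zero, mul_zero, map_zero, zero_mul, zero_add, pow_zero,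
        Nat.factorial_zero, Nat.cast_one, one_mul, Algebra.linearMap_apply]
      rw [aL_mul_wm]
      rw [show s * g = (((⟨s ^ (0 + 1), 0 + 1, rfl⟩ : Submonoid.powers s) : R)) * g by
        simp [pow_one]]
      exact (IsLocalization.mk'_mul_cancel_left (M := Submonoid.powers s) (S := Localization.Away s) _ _).symm
    | succ m =>
      have key : aL s ((-1) ^ (m + 1) * ((m + 1).factorial : R) * (s * g)) * wm s (m + 1) =
          aL s ((-1) ^ (m + 1) * ((m + 1).factorial : R) * g) * wm s m := by
        rw [show (-1) ^ (m + 1) * ((m + 1).factorial : R) * (s * g) =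
          ((-1) ^ (m + 1) * ((m + 1).factorial : R) * g) * s by ring, map_mul, mul_assoc,
          s_mul_wm]
      rw [Nat.add_sub_cancel, key, ← add_mul, ← map_add]
      have : (-1) ^ m * (m.factorial : R) * (g * ((m : R) + 1)) +
          (-1) ^ (m + 1) * (((m + 1).factorial : R)) * g = 0 := by
        rw [Nat.factorial_succ, Nat.cast_mul, Nat.cast_add, Nat.cast_one, pow_succ]
        ring
      rw [show ((m + 1 : ℕ) : R) = (m : R) + 1 by push_cast; ring] at *
      rw [this, map_zero, zero_mul]
      exact zero_mem _

lemma surj_aux (s : R) (z : Localization.Away s) :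
    ∃ (g : R) (m : ℕ), IsLocalization.mk' (Localization.Away s) g
      (⟨s ^ (m + 1), m + 1, rfl⟩ : Submonoid.powers s) = z := by
  obtain ⟨⟨g, t⟩, rfl⟩ := IsLocalization.mk'_surjective (M := Submonoid.powers s) (S := Localization.Away s) z
  dsimp only
  obtain ⟨j, hj⟩ := t.2
  refine ⟨g * s, j, ?_⟩
  have : (⟨s ^ (j + 1), j + 1, rfl⟩ : Submonoid.powers s) = t * ⟨s, 1, pow_one s⟩ := by
    refine Subtype.ext ?_
    show s ^ (j + 1) = (t : R) * s
    rw [← hj, pow_succ]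
  rw [this]
  exact IsLocalization.mk'_cancel (M := Submonoid.powers s) (S := Localization.Away s) g t
    ⟨s, 1, pow_one s⟩

lemma ker_le (s : R) (hs : s ≠ 0) :
    ∀ N (p : Polynomial R), p.natDegree ≤ N →
      phi s p ∈ LinearMap.range (Algebra.linearMap R (Localization.Away s)) →
      p ∈ LinearMap.range (Dop s) := by
  have hinj : Function.Injective (aL s) :=
    IsLocalization.injective (Localization.Away s)
      (powers_le_nonZeroDivisors_of_noZeroDivisors hs)
  intro N
  induction N with
  | zero =>
    intro p hdeg hmem
    obtain ⟨h, hh⟩ := hmem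
    rw [Algebra.linearMap_apply] at hh
    have hp : p = C (p.coeff 0) := eq_C_of_natDegree_le_zero hdeg
    rw [hp] at hh ⊢
    rw [← monomial_zero_left, phi_monomial] at hh
    simp only [pow_zero, Nat.factorial_zero, Nat.cast_one, one_mul] at hh
    rw [aL_mul_wm] at hh
    have hspec := IsLocalization.mk'_spec (Localization.Away s) (p.coeff 0)
      (⟨s ^ (0 + 1), 0 + 1, rfl⟩ : Submonoid.powers s)
    rw [← hh] at hspec
    have hcoeff : h * s ^ (0 + 1) = p.coeff 0 := hinj (by rw [map_mul]; exact hspec)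
    refine ⟨C h, ?_⟩
    rw [show (C h : Polynomial R) = monomial 0 h from (monomial_zero_left (a := h)).symm,
      Dop_monomial]
    simp only [Nat.cast_zero, mul_zero, map_zero, zero_add, Nat.zero_sub,
      monomial_zero_left]
    rw [show s * h = p.coeff 0 by rw [← hcoeff]; ring]
  | succ N ih =>
    intro p hdeg hmem
    by_cases hp0 : p = 0
    · exact ⟨0, by rw [map_zero, hp0]⟩
    by_cases hle : p.natDegree ≤ N
    · exact ih p hle hmem
    have hdeg' : p.natDegree = N + 1 := le_antisymm hdeg (Nat.succ_le_of_lt (not_le.mp hle))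
    obtain ⟨h, hh0⟩ := hmem
    rw [Algebra.linearMap_apply] at hh0
    have hh : aL s h = phi s p := hh0
    have E0 : ∀ m ∈ p.support,
        aL s ((-1) ^ m * (m.factorial : R) * p.coeff m * s ^ (N + 1 - m)) =
        aL s (s ^ (N + 1 + 1)) * (aL s ((-1) ^ m * (m.factorial : R) * p.coeff m) * wm s m) := by
      intro m hm
      have hmN : m ≤ N + 1 := hdeg' ▸ le_natDegree_of_mem_supp m hm
      rw [map_mul, ← pow_mul_wm s hmN, mul_left_comm]
    have E : (∑ m ∈ p.support,
        (-1) ^ m * (m.factorial : R) * p.coeff m * s ^ (N + 1 - m)) = s ^ (N + 1 + 1) * h := by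
      refine hinj ?_
      rw [map_sum, map_mul, hh, phi_apply, sum_def, Finset.mul_sum]
      exact Finset.sum_congr rfl E0
    have hsupp : N + 1 ∈ p.support := by
      rw [← hdeg']; exact natDegree_mem_support_of_nonzero hp0
    have hdvd1 : s ∣ ∑ m ∈ p.support.erase (N + 1),
        (-1) ^ m * (m.factorial : R) * p.coeff m * s ^ (N + 1 - m) :=
      Finset.dvd_sum fun m hm => by
        have h1 : m < N + 1 := lt_of_le_of_ne
          (hdeg' ▸ le_natDegree_of_mem_supp m (Finset.mem_of_mem_erase hm))
          (Finset.ne_of_mem_erase hm)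
        exact dvd_mul_of_dvd_right (dvd_pow_self s (Nat.sub_ne_zero_of_lt h1)) _
    have hdvd2 : s ∣ (-1) ^ (N + 1) * (((N + 1).factorial : R)) * p.coeff (N + 1) *
        s ^ (N + 1 - (N + 1)) := by
      have hsum := Finset.add_sum_erase _
        (fun m => (-1) ^ m * (m.factorial : R) * p.coeff m * s ^ (N + 1 - m)) hsupp
      have h2 : s ∣ s ^ (N + 1 + 1) * h := (dvd_pow_self s (by omega)).mul_right h
      have heq : (-1) ^ (N + 1) * (((N + 1).factorial : R)) * p.coeff (N + 1) *
          s ^ (N + 1 - (N + 1)) = s ^ (N + 1 + 1) * h -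
          ∑ m ∈ p.support.erase (N + 1),
            (-1) ^ m * (m.factorial : R) * p.coeff m * s ^ (N + 1 - m) := by
        rw [eq_sub_iff_add_eq, hsum, E]
      rw [heq]
      exact dvd_sub h2 hdvd1
    have hdvd3 : s ∣ p.coeff (N + 1) := by
      have hu : IsUnit ((-1 : R) ^ (N + 1) * (((N + 1).factorial : R))) := by
        refine IsUnit.mul (IsUnit.pow _ isUnit_one.neg) ?_
        rw [show (((N + 1).factorial : R)) =
            MvPolynomial.C ((((N + 1).factorial : ℕ) : k)) from
          (map_natCast (MvPolynomial.C : k →+* R) _).symm]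
        exact (isUnit_iff_ne_zero.mpr
          (by exact_mod_cast Nat.factorial_ne_zero (N + 1))).map _
      rw [Nat.sub_self, pow_zero, mul_one] at hdvd2
      exact (IsUnit.dvd_mul_left hu).mp hdvd2
    obtain ⟨q, hq⟩ := hdvd3
    have hDu : Dop s (monomial (N + 1) q) =
        monomial N (q * ((N + 1 : ℕ) : R)) + monomial (N + 1) (s * q) := by
      rw [Dop_monomial]
      norm_num
    have hdeg'' : (p - Dop s (monomial (N + 1) q)).natDegree ≤ N := by
      rw [natDegree_le_iff_coeff_eq_zero]
      intro j hj
      rw [coeff_sub, hDu, coeff_add, coeff_monomial, coeff_monomial]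
      rcases eq_or_lt_of_le (Nat.succ_le_of_lt hj) with hje | hjl
      · subst hje
        rw [if_neg (by omega), if_pos rfl, hq]
        ring
      · rw [if_neg (by omega), if_neg (by omega),
          coeff_eq_zero_of_natDegree_lt (by omega)]
        ring
    have hmem' : phi s (p - Dop s (monomial (N + 1) q)) ∈
        LinearMap.range (Algebra.linearMap R (Localization.Away s)) := by
      rw [map_sub]
      exact sub_mem ⟨h, hh0⟩
        (phi_Dop_mem s (monomial (N + 1) q))
    obtain ⟨v, hv⟩ := ih _ hdeg'' hmem'
    exact ⟨monomial (N + 1) q + v, by rw [map_add, hv]; ring⟩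

end DworkRankOne

set_option maxHeartbeats 1000000
open DworkRankOne

theorem dwork_rank_one_explicit (k : Type) [Field k] [CharZero k] (n : ℕ)
    (s : MvPolynomial (Fin n) k) (hs : s ≠ 0) :
    ∃ e : (Polynomial (MvPolynomial (Fin n) k) ⧸ LinearMap.range
          ((Polynomial.derivative : Polynomial (MvPolynomial (Fin n) k)
              →ₗ[MvPolynomial (Fin n) k] Polynomial (MvPolynomial (Fin n) k))
            + LinearMap.mulLeft (MvPolynomial (Fin n) k) (C s)))
        ≃ₗ[MvPolynomial (Fin n) k]
        (Localization.Away s ⧸ LinearMap.range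
          (Algebra.linearMap (MvPolynomial (Fin n) k) (Localization.Away s))),
      ∀ (g : MvPolynomial (Fin n) k) (m : ℕ),
        e (Submodule.Quotient.mk (C g * X ^ m)) =
          Submodule.Quotient.mk
            (Localization.mk ((-1) ^ m * (m.factorial : MvPolynomial (Fin n) k) * g)
              (⟨s ^ (m + 1), ⟨m + 1, rfl⟩⟩ : Submonoid.powers s)) := by
  have hle : LinearMap.range (DworkRankOne.Dop s) ≤ LinearMap.ker
      ((LinearMap.range (Algebra.linearMap (MvPolynomial (Fin n) k)
        (Localization.Away s))).mkQ ∘ₗ phi s) := by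
    rintro x ⟨y, rfl⟩
    simp only [LinearMap.mem_ker, LinearMap.comp_apply, Submodule.mkQ_apply,
      Submodule.Quotient.mk_eq_zero]
    exact phi_Dop_mem s y
  let e0 := Submodule.liftQ (LinearMap.range (DworkRankOne.Dop s))
    ((LinearMap.range (Algebra.linearMap (MvPolynomial (Fin n) k)
      (Localization.Away s))).mkQ ∘ₗ phi s) hle
  have he0 : ∀ x : Polynomial (MvPolynomial (Fin n) k),
      e0 (Submodule.Quotient.mk x) = Submodule.Quotient.mk (phi s x) := fun x => by
    rw [show e0 = Submodule.liftQ (LinearMap.range (DworkRankOne.Dop s))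
      ((LinearMap.range (Algebra.linearMap (MvPolynomial (Fin n) k)
        (Localization.Away s))).mkQ ∘ₗ phi s) hle from rfl, Submodule.liftQ_apply,
      LinearMap.comp_apply, Submodule.mkQ_apply]
  have hinj : Function.Injective e0 := by
    rw [← LinearMap.ker_eq_bot]
    refine Submodule.ker_liftQ_eq_bot _ _ _ ?_
    intro x hx
    simp only [LinearMap.mem_ker, LinearMap.comp_apply, Submodule.mkQ_apply,
      Submodule.Quotient.mk_eq_zero] at hx
    exact ker_le s hs x.natDegree x le_rfl hx
  have hsurj : Function.Surjective e0 := by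
    intro z
    obtain ⟨w, rfl⟩ := Submodule.Quotient.mk_surjective _ z
    obtain ⟨g, m, hg⟩ := surj_aux s w
    refine ⟨Submodule.Quotient.mk
      (monomial m ((-1) ^ m * MvPolynomial.C ((m.factorial : k)⁻¹) * g)), ?_⟩
    rw [he0]
    congr 1
    rw [phi_monomial, aL_mul_wm, ← hg]
    congr 1
    have h1 : ((m.factorial : MvPolynomial (Fin n) k)) *
        MvPolynomial.C ((m.factorial : k)⁻¹) = 1 := by
      rw [show ((m.factorial : MvPolynomial (Fin n) k)) =
          MvPolynomial.C (((m.factorial : ℕ) : k)) from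
        (map_natCast (MvPolynomial.C : k →+* MvPolynomial (Fin n) k) _).symm, ← map_mul,
        mul_inv_cancel₀ (by exact_mod_cast Nat.factorial_ne_zero m)]
      exact map_one _
    calc (-1 : MvPolynomial (Fin n) k) ^ m * (m.factorial : MvPolynomial (Fin n) k) *
          ((-1) ^ m * MvPolynomial.C ((m.factorial : k)⁻¹) * g)
        = ((-1 : MvPolynomial (Fin n) k) ^ m * (-1) ^ m) *
          ((m.factorial : MvPolynomial (Fin n) k) *
            MvPolynomial.C ((m.factorial : k)⁻¹)) * g := by ring
      _ = g := by rw [h1, ← mul_pow]; norm_num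
  refine ⟨LinearEquiv.ofBijective e0 ⟨hinj, hsurj⟩, ?_⟩
  intro g m
  show e0 (Submodule.Quotient.mk (C g * X ^ m)) = _
  rw [C_mul_X_pow_eq_monomial, he0]
  congr 1
  rw [phi_monomial, aL_mul_wm, Localization.mk_eq_mk']
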